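/- Let (X,d) be a metric space, p ≥ 1, μ ∈ P_p(X), k ∈ ℕ, and R ⊆ X closed. Then the set C_p(μ,k,R) of optimal cluster center sets — i.e., sets S ⊆ R with 1 ≤ #S ≤ k minimizing W_p(S,μ) = ∫ min_{x∈S} d(x,y)^p dμ(y) over all such sets — is closed in the space K(X) of nonempty compact subsets of X with the Hausdorff metric. -/

import Mathlib

open Filter MeasureTheory Topology TopologicalSpace Metric Set

noncomputable section

/-- Kuratowski lower limit of a sequence of sets. -/
def KurLi {Y : Type*} [TopologicalSpace Y] (A : ℕ → Set Y) : Set Y :=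
  {x | ∀ U ∈ nhds x, ∀ᶠ n in atTop, (U ∩ A n).Nonempty}

/-- Kuratowski upper limit of a sequence of sets. -/
def KurLs {Y : Type*} [TopologicalSpace Y] (A : ℕ → Set Y) : Set Y :=
  {x | ∀ U ∈ nhds x, ∃ᶠ n in atTop, (U ∩ A n).Nonempty}

variable {X : Type*} [MetricSpace X] [MeasurableSpace X]

/-- The clustering cost `W_p(S,μ) = ∫ d(y,S)^p dμ(y)`. -/
def Wp (p : ℝ) (S : Set X) (μ : Measure X) : ℝ :=
  ∫ y, infDist y S ^ p ∂μ

/-- `μ` has a finite `p`-th moment. -/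
def FinMom (p : ℝ) (μ : Measure X) : Prop :=
  ∃ x : X, Integrable (fun y => dist x y ^ p) μ

/-- Convergence in the `p`-Wasserstein topology: weak convergence together with
convergence of the `p`-th moments about some point. -/
def WassTendsto (p : ℝ) (μ : ℕ → Measure X) (ν : Measure X) : Prop :=
  (∀ f : BoundedContinuousFunction X ℝ,
      Tendsto (fun n => ∫ y, f y ∂ μ n) atTop (𝓝 (∫ y, f y ∂ ν))) ∧
  ∃ x : X, Tendsto (fun n => ∫ y, dist x y ^ p ∂ μ n) atTop (𝓝 (∫ y, dist x y ^ p ∂ ν))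

/-- `S` is a feasible set of cluster centers: a nonempty finite subset of `R`
with at most `k` points. -/
def Feas (k : ℕ) (R S : Set X) : Prop :=
  S ⊆ R ∧ S.Finite ∧ S.Nonempty ∧ S.ncard ≤ k

/-- The optimal clustering cost `m_{k,p}(μ,R)`. -/
def mCost (p : ℝ) (μ : Measure X) (k : ℕ) (R : Set X) : ℝ :=
  sInf ((fun S => Wp p S μ) '' {S | Feas k R S})

/-- The set of optimal cluster-center sets `C_p(μ,k,R)`, viewed as a subset of the
hyperspace of nonempty compact subsets of `X` with the Hausdorff metric. -/
def Cp (p : ℝ) (μ : Measure X) (k : ℕ) (R : Set X) : Set (NonemptyCompacts X) :=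
  {S | Feas k R (S : Set X) ∧ ∀ T : Set X, Feas k R T → Wp p (S : Set X) μ ≤ Wp p T μ}

/-- The support of a measure on a metric space. -/
def measSupp (μ : Measure X) : Set X :=
  {x | ∀ r : ℝ, 0 < r → μ (Metric.ball x r) ≠ 0}


lemma my_add_rpow_le {p a b : ℝ} (hp : 1 ≤ p) (ha : 0 ≤ a) (hb : 0 ≤ b) :
    (a + b) ^ p ≤ 2 ^ p * (a ^ p + b ^ p) := by
  have h1 : a + b ≤ 2 * max a b := by
    rcases max_cases a b with ⟨h, h'⟩ | ⟨h, h'⟩ <;> nlinarith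
  calc (a + b) ^ p ≤ (2 * max a b) ^ p :=
        Real.rpow_le_rpow (by positivity) h1 (by linarith)
    _ = 2 ^ p * (max a b) ^ p := Real.mul_rpow (by norm_num) (le_max_iff.2 (Or.inl ha))
    _ ≤ 2 ^ p * (a ^ p + b ^ p) := by
        have h3 : (max a b) ^ p ≤ a ^ p + b ^ p := by
          rcases max_cases a b with ⟨h, _⟩ | ⟨h, _⟩ <;> rw [h]
          · exact le_add_of_nonneg_right (Real.rpow_nonneg hb p)
          · exact le_add_of_nonneg_left (Real.rpow_nonneg ha p)
        have h2 : (0:ℝ) ≤ 2 ^ p := Real.rpow_nonneg (by norm_num) p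
        nlinarith

/-- The set `C_p(μ,k,R)` of optimal cluster-center sets is closed in the hyperspace
`K(X)` of nonempty compact subsets of `X` with the Hausdorff metric. -/
theorem stmt8 {X : Type*} [MetricSpace X] [MeasurableSpace X] [BorelSpace X]
    (p : ℝ) (hp : 1 ≤ p) (μ : Measure X) [IsProbabilityMeasure μ] (hμ : FinMom p μ)
    (k : ℕ) (R : Set X) (hR : IsClosed R) :
    IsClosed (Cp p μ k R) := by
  classical
  rw [← isSeqClosed_iff_isClosed]
  intro S A hS hSA
  have hd : Tendsto (fun n => hausdorffDist (S n : Set X) (A : Set X)) atTop (𝓝 0) := by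
    have := tendsto_iff_dist_tendsto_zero.mp hSA
    simpa [NonemptyCompacts.dist_eq] using this
  have hne : ∀ n, (S n : Set X).Nonempty := fun n => (S n).nonempty
  have hAne : (A : Set X).Nonempty := A.nonempty
  have hEd : ∀ n, EMetric.hausdorffEdist (S n : Set X) (A : Set X) ≠ ⊤ := fun n =>
    Metric.hausdorffEdist_ne_top_of_nonempty_of_bounded (hne n) hAne
      (S n).isCompact.isBounded A.isCompact.isBounded
  have hEd' : ∀ n, EMetric.hausdorffEdist (A : Set X) (S n : Set X) ≠ ⊤ := fun n => by
    show Metric.hausdorffEDist _ _ ≠ ⊤; rw [Metric.hausdorffEDist_comm]; exact hEd n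
  have hsub : ∀ n, (S n : Set X) ⊆ R := fun n => (hS n).1.1
  have hfin : ∀ n, (S n : Set X).Finite := fun n => (hS n).1.2.1
  have hcard : ∀ n, (S n : Set X).ncard ≤ k := fun n => (hS n).1.2.2.2
  have hk : 1 ≤ k := le_trans ((Set.ncard_pos (hfin 0)).mpr (hne 0)) (hcard 0)
  -- key distance bounds
  have hb1 : ∀ n, ∀ y : X, infDist y (S n : Set X) ≤ infDist y (A : Set X) +
      hausdorffDist (S n : Set X) (A : Set X) := by
    intro n y
    have := Metric.infDist_le_infDist_add_hausdorffDist (x := y) (hEd' n)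
    rwa [hausdorffDist_comm] at this
  -- infDist convergence
  have hinf : ∀ y : X, Tendsto (fun n => infDist y (S n : Set X)) atTop
      (𝓝 (infDist y (A : Set X))) := by
    intro y
    rw [tendsto_iff_dist_tendsto_zero]
    refine squeeze_zero (fun n => dist_nonneg)
      (g := fun n => hausdorffDist (S n : Set X) (A : Set X)) (fun n => ?_) hd
    rw [Real.dist_eq, abs_sub_le_iff]
    constructor
    · have := hb1 n y; linarith
    · have := Metric.infDist_le_infDist_add_hausdorffDist (x := y) (hEd n)
      linarith
  -- A ⊆ R
  have hAR : (A : Set X) ⊆ R := by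
    intro x hx
    have hRne : R.Nonempty := (hne 0).mono (hsub 0)
    have h0 : infDist x R ≤ 0 := by
      refine ge_of_tendsto' hd (fun n => ?_)
      calc infDist x R ≤ infDist x (S n : Set X) :=
            Metric.infDist_le_infDist_of_subset (hsub n) (hne n)
        _ ≤ infDist x (A : Set X) + hausdorffDist (S n : Set X) (A : Set X) := hb1 n x
        _ = hausdorffDist (S n : Set X) (A : Set X) := by
            rw [infDist_zero_of_mem hx, zero_add]
    exact (hR.mem_iff_infDist_zero hRne).mpr (le_antisymm h0 infDist_nonneg)
  -- every finset inside A has card ≤ k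
  have key : ∀ F : Finset X, (F : Set X) ⊆ (A : Set X) → F.card ≤ k := by
    intro F hF
    rcases le_or_gt F.card 1 with h1 | h1
    · exact le_trans h1 hk
    obtain ⟨a, b, ha, hb, hab⟩ := Finset.one_lt_card_iff.mp h1
    have hod : F.offDiag.Nonempty := ⟨(a, b), Finset.mem_offDiag.mpr ⟨ha, hb, hab⟩⟩
    obtain ⟨q, hq, hqmin⟩ := F.offDiag.exists_min_image (fun q => dist q.1 q.2) hod
    set δ : ℝ := dist q.1 q.2 with hδ
    have hδpos : 0 < δ := dist_pos.mpr (Finset.mem_offDiag.mp hq).2.2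
    obtain ⟨n, hn⟩ :=
      (hd.eventually (eventually_lt_nhds (show (0:ℝ) < δ/3 by linarith))).exists
    have hn' : hausdorffDist (A : Set X) (S n : Set X) < δ/3 := by
      rwa [hausdorffDist_comm]
    have hch : ∀ x : X, ∃ y : X, x ∈ (F : Set X) →
        y ∈ (S n : Set X) ∧ dist x y < δ/3 := by
      intro x
      by_cases hx : x ∈ (F : Set X)
      · obtain ⟨y, hy, hxy⟩ :=
          Metric.exists_dist_lt_of_hausdorffDist_lt (hF hx) hn' (hEd' n)
        exact ⟨y, fun _ => ⟨hy, hxy⟩⟩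
      · exact ⟨x, fun h => absurd h hx⟩
    choose g hg using hch
    have hginj : Set.InjOn g (F : Set X) := by
      intro x hx y hy hxy
      by_contra hne'
      have hmem : (x, y) ∈ F.offDiag := Finset.mem_offDiag.mpr ⟨hx, hy, hne'⟩
      have hmin := hqmin (x, y) hmem
      have h1 := (hg x hx).2
      have h2 := (hg y hy).2
      have : dist x y ≤ dist x (g x) + dist (g x) (g y) + dist (g y) y :=
        dist_triangle4 x (g x) (g y) y
      rw [hxy] at h1 this
      simp only [dist_self, add_zero] at this
      rw [dist_comm (g y) y] at this
      simp only at hmin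
      linarith
    have himg : ((F.image g : Finset X) : Set X) ⊆ (S n : Set X) := by
      intro z hz
      simp only [Finset.coe_image, Set.mem_image, Finset.mem_coe] at hz
      obtain ⟨x, hx, rfl⟩ := hz
      exact (hg x hx).1
    calc F.card = (F.image g).card := (Finset.card_image_of_injOn hginj).symm
      _ = ((F.image g : Finset X) : Set X).ncard := (Set.ncard_coe_finset _).symm
      _ ≤ (S n : Set X).ncard := Set.ncard_le_ncard himg (hfin n)
      _ ≤ k := hcard n
  -- A is finite with at most k points
  have hAfin : (A : Set X).Finite := by
    by_contra hinfA
    obtain ⟨F, hFA, hFcard⟩ := Set.Infinite.exists_subset_card_eq hinfA (k + 1)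
    have := key F hFA
    omega
  have hAcard : (A : Set X).ncard ≤ k := by
    have := key hAfin.toFinset (by simp)
    rwa [← Set.ncard_coe_finset, Set.Finite.coe_toFinset] at this
  -- Wp convergence
  obtain ⟨x0, hx0⟩ := hμ
  obtain ⟨s0, hs0⟩ := hAne
  set c : ℝ := dist x0 s0 + 1 with hc
  have hc0 : 0 ≤ c := by positivity
  have hWp : Tendsto (fun n => Wp p (S n : Set X) μ) atTop (𝓝 (Wp p (A : Set X) μ)) := by
    simp only [Wp]
    refine tendsto_integral_filter_of_dominated_convergence
      (fun y => 2 ^ p * (dist x0 y ^ p + c ^ p)) ?_ ?_ ?_ ?_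
    · refine Eventually.of_forall (fun n => ?_)
      exact ((continuous_infDist_pt (S n : Set X)).rpow_const
        (fun y => Or.inr (by linarith))).aestronglyMeasurable
    · have hev : ∀ᶠ n in atTop, hausdorffDist (S n : Set X) (A : Set X) < 1 :=
        hd.eventually (eventually_lt_nhds one_pos)
      filter_upwards [hev] with n hn
      refine Eventually.of_forall (fun y => ?_)
      have h1 : infDist y (S n : Set X) ≤ dist x0 y + c := by
        have h2 : infDist y (A : Set X) ≤ dist y s0 := infDist_le_dist_of_mem hs0
        have h3 := hb1 n y
        have h4 : dist y s0 ≤ dist y x0 + dist x0 s0 := dist_triangle y x0 s0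
        rw [dist_comm y x0] at h4
        rw [hc]; linarith
      rw [Real.norm_eq_abs, abs_of_nonneg (Real.rpow_nonneg infDist_nonneg p)]
      calc infDist y (S n : Set X) ^ p ≤ (dist x0 y + c) ^ p :=
            Real.rpow_le_rpow infDist_nonneg h1 (by linarith)
        _ ≤ 2 ^ p * (dist x0 y ^ p + c ^ p) := my_add_rpow_le hp dist_nonneg hc0
    · exact ((hx0.add (integrable_const (c ^ p))).const_mul (2 ^ p))
    · refine Eventually.of_forall (fun y => ?_)
      have hct : ContinuousAt (fun x : ℝ => x ^ p) (infDist y (A : Set X)) :=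
        Real.continuousAt_rpow_const _ p (Or.inr (by linarith))
      exact hct.tendsto.comp (hinf y)
  refine ⟨⟨hAR, hAfin, A.nonempty, hAcard⟩, fun T hT => ?_⟩
  exact le_of_tendsto' hWp (fun n => (hS n).2 T hT)
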